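/- Let L : ℝ^(m×n) → ℝ be differentiable and satisfy the Polyak–Łojasiewicz inequality with parameter β > 0 on a set W, i.e., (1/2)‖∇L(W)‖_F² ≥ β(L(W) − L*) for all W ∈ W, where L* = inf L. Let F(θ) := L(W(θ)) for a differentiable map W : ℝ^p → ℝ^(m×n) with Jacobian J(θ) ∈ ℝ^(mn×p). If σ_min(J(θ)) ≥ γ > 0 for all θ in a domain whose image under W lies in W, then F satisfies the PL inequality on that domain with parameter βγ²: (1/2)‖∇F(θ)‖² ≥ βγ²(F(θ) − L*). -/

import Mathlib

open scoped RealInnerProductSpace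

theorem gradient_comp_aux {E F : Type*} [NormedAddCommGroup E] [InnerProductSpace ℝ E]
    [NormedAddCommGroup F] [InnerProductSpace ℝ F] [CompleteSpace E] [CompleteSpace F]
    (L : F → ℝ) (Wmap : E → F) (θ : E)
    (hL : DifferentiableAt ℝ L (Wmap θ)) (hW : DifferentiableAt ℝ Wmap θ) :
    gradient (fun θ' => L (Wmap θ')) θ =
      ContinuousLinearMap.adjoint (fderiv ℝ Wmap θ) (gradient L (Wmap θ)) := by
  have hg : HasGradientAt L (gradient L (Wmap θ)) (Wmap θ) := hL.hasGradientAt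
  have hfd : HasFDerivAt L (InnerProductSpace.toDual ℝ F (gradient L (Wmap θ))) (Wmap θ) :=
    (hasGradientAt_iff_hasFDerivAt.mp hg)
  have hcomp := hfd.comp θ hW.hasFDerivAt
  apply HasGradientAt.gradient
  rw [hasGradientAt_iff_hasFDerivAt]
  refine hcomp.congr_fderiv ?_
  ext v
  simp [ContinuousLinearMap.adjoint_inner_left, real_inner_comm]

/-- **PL is preserved under composition with a map whose Jacobian has singular
values bounded below.** If `L` is differentiable and satisfies the PL inequality
with parameter `β > 0` on a set `S` (with `Lstar` the infimum of `L` on `S`),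
`Wmap` is differentiable, maps the domain `D` into `S`, and at every `θ ∈ D` the
Jacobian `J θ = fderiv ℝ Wmap θ` satisfies `‖Jᵀ v‖ ≥ γ ‖v‖` (i.e.
`σ_min(J θ) ≥ γ > 0`), then `F = L ∘ Wmap` satisfies the PL inequality on `D`
with parameter `β * γ²`. -/
theorem pl_composition
    {m n p : ℕ}
    (L : EuclideanSpace ℝ (Fin m × Fin n) → ℝ)
    (S : Set (EuclideanSpace ℝ (Fin m × Fin n)))
    (β Lstar : ℝ) (hβ : 0 < β)
    (hLdiff : ∀ W ∈ S, DifferentiableAt ℝ L W)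
    (hLstar : IsGLB (L '' S) Lstar)
    (hPL : ∀ W ∈ S, (1 / 2) * ‖gradient L W‖ ^ 2 ≥ β * (L W - Lstar))
    (Wmap : EuclideanSpace ℝ (Fin p) → EuclideanSpace ℝ (Fin m × Fin n))
    (hWdiff : Differentiable ℝ Wmap)
    (D : Set (EuclideanSpace ℝ (Fin p)))
    (hmap : ∀ θ ∈ D, Wmap θ ∈ S)
    (γ : ℝ) (hγ : 0 < γ)
    (hσ : ∀ θ ∈ D, ∀ v : EuclideanSpace ℝ (Fin m × Fin n),
      γ * ‖v‖ ≤ ‖ContinuousLinearMap.adjoint (fderiv ℝ Wmap θ) v‖) :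
    ∀ θ ∈ D,
      (1 / 2) * ‖gradient (fun θ' => L (Wmap θ')) θ‖ ^ 2 ≥
        β * γ ^ 2 * (L (Wmap θ) - Lstar) := by
  intro θ hθ
  have hWS := hmap θ hθ
  have hgrad := gradient_comp_aux L Wmap θ (hLdiff _ hWS) (hWdiff θ)
  rw [hgrad]
  have hbound := hσ θ hθ (gradient L (Wmap θ))
  have h1 : (γ * ‖gradient L (Wmap θ)‖) ^ 2 ≤
      ‖ContinuousLinearMap.adjoint (fderiv ℝ Wmap θ) (gradient L (Wmap θ))‖ ^ 2 := by
    apply sq_le_sq' _ hbound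
    nlinarith [norm_nonneg (gradient L (Wmap θ)),
      norm_nonneg (ContinuousLinearMap.adjoint (fderiv ℝ Wmap θ) (gradient L (Wmap θ)))]
  have hPLθ := hPL _ hWS
  nlinarith [sq_nonneg γ]
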